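/- Suppose the polynomial identity N(q)H(q) = 0 holds and the normalization N(1)F = -a(1) holds, where a(1) ≠ 0. If the DAE H(q)x[k] + L(q)y[k] + F f[k] = 0 holds for all k, and the residual is defined by r[k] satisfying a(q) r[k] = N(q)L(q) y[k] (interpreted coefficient-wise as a linear recurrence), then a(q) r[k] = -N(q)F f[k]; in particular, if f[k] = f is constant for all k and r[k] converges to a limit r_∞ as k → ∞, then r_∞ = f. -/
import Mathlib


open Filter Matrix


private lemma sum_dotProduct' {m ι : Type*} [Fintype m] (s : Finset ι)
    (u : ι → m → ℝ) (v : m → ℝ) : (∑ i ∈ s, u i) ⬝ᵥ v = ∑ i ∈ s, u i ⬝ᵥ v := by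
  simp only [dotProduct, Finset.sum_apply, Finset.sum_mul]
  exact Finset.sum_comm

private lemma dotProduct_sum' {m ι : Type*} [Fintype m] (s : Finset ι)
    (u : m → ℝ) (v : ι → m → ℝ) : u ⬝ᵥ (∑ i ∈ s, v i) = ∑ i ∈ s, u ⬝ᵥ v i := by
  simp only [dotProduct, Finset.sum_apply, Finset.mul_sum]
  exact Finset.sum_comm

/-- attack-recovery property of the residual generator.  If the polynomial
identity `N(q)H(q) = 0` and the normalization `N(1)F = -a(1)` (with `a(1) ≠ 0`) hold,
the DAE `H(q)x + L(q)y + F f = 0` holds and `a(q) r = N(q)L(q) y`, then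
`a(q) r = -N(q)F f`, and for a constant attack `f` any limit of `r` equals `f`. -/
theorem residual_generator_attack_recovery
    (nx ny nr d dL da : ℕ)
    (H : Fin 2 → Matrix (Fin nr) (Fin nx) ℝ)
    (L : Fin (dL + 1) → Matrix (Fin nr) (Fin ny) ℝ)
    (F : Fin nr → ℝ)
    (N : Fin (d + 1) → Fin nr → ℝ)
    (a : Fin (da + 1) → ℝ)
    (ha1 : (∑ i, a i) ≠ 0)
    (hNH : ∀ k : ℕ,
      (∑ i : Fin (d + 1), ∑ j : Fin 2,
        if (i : ℕ) + (j : ℕ) = k then Matrix.vecMul (N i) (H j) else 0) = 0)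
    (hnorm : (∑ i, N i) ⬝ᵥ F = -(∑ i, a i))
    (x : ℤ → Fin nx → ℝ) (y : ℤ → Fin ny → ℝ) (f : ℤ → ℝ) (r : ℤ → ℝ)
    (hDAE : ∀ k : ℤ,
      (∑ j : Fin 2, (H j).mulVec (x (k + (j : ℕ)))) +
        (∑ j : Fin (dL + 1), (L j).mulVec (y (k + (j : ℕ)))) + f k • F = 0)
    (hres : ∀ k : ℤ,
      (∑ i : Fin (da + 1), a i * r (k + (i : ℕ))) =
        ∑ i : Fin (d + 1), ∑ j : Fin (dL + 1),
          (N i) ⬝ᵥ ((L j).mulVec (y (k + (i : ℕ) + (j : ℕ)))) ) :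
    (∀ k : ℤ,
      (∑ i : Fin (da + 1), a i * r (k + (i : ℕ))) =
        -(∑ i : Fin (d + 1), ((N i) ⬝ᵥ F) * f (k + (i : ℕ)))) ∧
    (∀ (fc rinf : ℝ), (∀ k, f k = fc) →
      Tendsto r atTop (nhds rinf) → rinf = fc) := by
  -- key cancellation lemma
  have hA : ∀ k : ℤ,
      (∑ i : Fin (d + 1), ∑ j : Fin 2,
        (N i) ⬝ᵥ ((H j).mulVec (x (k + (i : ℕ) + (j : ℕ))))) = 0 := by
    intro k
    have hrw : ∀ (i : Fin (d + 1)) (j : Fin 2),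
        (N i) ⬝ᵥ ((H j).mulVec (x (k + (i : ℕ) + (j : ℕ)))) =
        ∑ m ∈ Finset.range (d + 2),
          (if (i : ℕ) + (j : ℕ) = m then Matrix.vecMul (N i) (H j) else 0) ⬝ᵥ
            x (k + (m : ℕ)) := by
      intro i j
      rw [Finset.sum_eq_single ((i : ℕ) + (j : ℕ))]
      · simp [dotProduct_mulVec, add_assoc]
      · intro m _ hm
        simp [Ne.symm hm]
      · intro hmem
        exact absurd (Finset.mem_range.mpr (by omega)) hmem
    calc (∑ i : Fin (d + 1), ∑ j : Fin 2,
            (N i) ⬝ᵥ ((H j).mulVec (x (k + (i : ℕ) + (j : ℕ)))))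
        = ∑ m ∈ Finset.range (d + 2), ∑ i : Fin (d + 1), ∑ j : Fin 2,
            (if (i : ℕ) + (j : ℕ) = m then Matrix.vecMul (N i) (H j) else 0) ⬝ᵥ
              x (k + (m : ℕ)) := by
          simp_rw [hrw]
          rw [Finset.sum_congr rfl fun (i : Fin (d+1)) (_ : i ∈ Finset.univ) =>
            (Finset.sum_comm (s := (Finset.univ : Finset (Fin 2)))
              (t := Finset.range (d + 2)))]
          exact Finset.sum_comm
      _ = ∑ m ∈ Finset.range (d + 2),
            (∑ i : Fin (d + 1), ∑ j : Fin 2,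
              if (i : ℕ) + (j : ℕ) = m then Matrix.vecMul (N i) (H j) else 0) ⬝ᵥ
              x (k + (m : ℕ)) := by
          refine Finset.sum_congr rfl fun m _ => ?_
          rw [sum_dotProduct']
          exact Finset.sum_congr rfl fun i _ => (sum_dotProduct' _ _ _).symm
      _ = 0 := by
          refine Finset.sum_eq_zero fun m _ => ?_
          rw [hNH m]
          simp
  have part1 : ∀ k : ℤ,
      (∑ i : Fin (da + 1), a i * r (k + (i : ℕ))) =
        -(∑ i : Fin (d + 1), ((N i) ⬝ᵥ F) * f (k + (i : ℕ))) := by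
    intro k
    have hD : ∀ i : Fin (d + 1),
        (N i) ⬝ᵥ ((∑ j : Fin 2, (H j).mulVec (x (k + (i : ℕ) + (j : ℕ)))) +
          (∑ j : Fin (dL + 1), (L j).mulVec (y (k + (i : ℕ) + (j : ℕ)))) +
          f (k + (i : ℕ)) • F) = 0 := by
      intro i
      rw [hDAE (k + (i : ℕ))]
      simp
    have hsum := Finset.sum_congr rfl (fun i (_ : i ∈ Finset.univ) => hD i)
    rw [Finset.sum_const_zero] at hsum
    simp only [dotProduct_add, dotProduct_sum', dotProduct_smul, smul_eq_mul,
      Finset.sum_add_distrib] at hsum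
    rw [hA k] at hsum
    rw [hres k]
    have : (∑ i : Fin (d + 1), ∑ j : Fin (dL + 1),
        (N i) ⬝ᵥ ((L j).mulVec (y (k + (i : ℕ) + (j : ℕ))))) +
        (∑ i : Fin (d + 1), f (k + (i : ℕ)) * ((N i) ⬝ᵥ F)) = 0 := by
      linarith [hsum]
    have := eq_neg_of_add_eq_zero_left this
    rw [this]
    congr 1
    exact Finset.sum_congr rfl fun i _ => mul_comm _ _
  refine ⟨part1, ?_⟩
  intro fc rinf hfc hr
  have hNF : (∑ i : Fin (d + 1), (N i) ⬝ᵥ F) = -(∑ i, a i) := by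
    rw [← hnorm, sum_dotProduct']
  have hconst : ∀ k : ℤ,
      (∑ i : Fin (da + 1), a i * r (k + (i : ℕ))) = (∑ i, a i) * fc := by
    intro k
    rw [part1 k]
    simp only [hfc]
    rw [← Finset.sum_mul, hNF]
    ring
  have hlim : Tendsto (fun k : ℤ => ∑ i : Fin (da + 1), a i * r (k + (i : ℕ)))
      atTop (nhds (∑ i : Fin (da + 1), a i * rinf)) := by
    refine tendsto_finset_sum _ fun i _ => ?_
    exact Tendsto.const_mul _ (hr.comp (tendsto_atTop_add_const_right _ _ tendsto_id))
  have hlim2 : Tendsto (fun k : ℤ => ∑ i : Fin (da + 1), a i * r (k + (i : ℕ)))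
      atTop (nhds ((∑ i, a i) * fc)) := by
    simp_rw [hconst]
    exact tendsto_const_nhds
  have heq : (∑ i : Fin (da + 1), a i * rinf) = (∑ i, a i) * fc :=
    tendsto_nhds_unique hlim hlim2
  rw [← Finset.sum_mul] at heq
  exact mul_left_cancel₀ ha1 heq
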